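/- Let F : ℝ → [0,1] be a CDF and let N ≥ M ≥ 1 be integers. Define Y as follows: given N i.i.d. random variables Z_1,...,Z_N with common CDF F, let Z_{(1)} ≤ ... ≤ Z_{(N)} be their order statistics, and let R be uniform on {N-M+1,...,N}, independent of the Z_i. Then the CDF of Y = Z_{(R)} satisfies F_Y(x) = Σ_{m=0}^{M-1} e_1(N,M,m) · F(x)^{N-m}, where e_1(N,M,m) = Σ_{ℓ=m}^{M-1} ((M-ℓ)/M) · C(N,ℓ) · C(ℓ,m) · (-1)^{ℓ-m}. -/

import Mathlib

open MeasureTheory ProbabilityTheory ENNReal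

/-- The `m`-th order statistic (1-indexed, `m`-th smallest) of `z : Fin N → ℝ`. -/
noncomputable def orderStat (N : ℕ) (z : Fin N → ℝ) (m : ℕ) : ℝ :=
  (List.insertionSort (· ≤ ·) (List.ofFn z)).getD (m - 1) 0

/-- The coefficients `e₁(N,M,m)`. -/
noncomputable def e1 (N M m : ℕ) : ℝ :=
  ∑ ℓ ∈ Finset.Icc m (M - 1),
    (((M : ℝ) - ℓ) / M) * (N.choose ℓ : ℝ) * (ℓ.choose m : ℝ) * (-1 : ℝ) ^ (ℓ - m)

section Lists

lemma sorted_getD_le_iff (l : List ℝ) (hl : l.Pairwise (· ≤ ·)) (x : ℝ) (ℓ : ℕ)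
    (h1 : 1 ≤ ℓ) (h2 : ℓ ≤ l.length) :
    l.getD (ℓ - 1) 0 ≤ x ↔ ℓ ≤ l.countP (fun a => a ≤ x) := by
  have hj : ℓ - 1 < l.length := by omega
  rw [List.getD_eq_getElem l 0 hj]
  constructor
  · intro h
    have htd := List.take_append_drop ℓ l
    have hcnt : l.countP (fun a => decide (a ≤ x)) =
        (l.take ℓ).countP (fun a => decide (a ≤ x)) +
        (l.drop ℓ).countP (fun a => decide (a ≤ x)) := by
      conv_lhs => rw [← htd]
      exact List.countP_append
    have hall : (l.take ℓ).countP (fun a => decide (a ≤ x)) = (l.take ℓ).length := by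
      rw [List.countP_eq_length]
      intro a ha
      obtain ⟨i, hi, rfl⟩ := List.mem_iff_getElem.mp ha
      have hi' : i < ℓ := by simpa using (lt_of_lt_of_le hi (by simp))
      rw [List.getElem_take]
      have : l[i]'(by omega) ≤ l[ℓ-1]'hj := by
        rcases eq_or_lt_of_le (by omega : i ≤ ℓ - 1) with he | hlt
        · simp [he]
        · have := hl.rel_get_of_lt (a := ⟨i, by omega⟩) (b := ⟨ℓ-1, hj⟩) hlt
          simpa using this
      simpa using le_trans this h
    have hlen : (l.take ℓ).length = ℓ := by simp [h2]
    simp only [List.countP] at *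
    omega
  · intro h
    by_contra hx
    push_neg at hx
    have htd := List.take_append_drop (ℓ - 1) l
    have hcnt : l.countP (fun a => decide (a ≤ x)) =
        (l.take (ℓ-1)).countP (fun a => decide (a ≤ x)) +
        (l.drop (ℓ-1)).countP (fun a => decide (a ≤ x)) := by
      conv_lhs => rw [← htd]
      exact List.countP_append
    have hzero : (l.drop (ℓ-1)).countP (fun a => decide (a ≤ x)) = 0 := by
      rw [List.countP_eq_zero]
      intro a ha
      obtain ⟨i, hi, rfl⟩ := List.mem_iff_getElem.mp ha
      rw [List.getElem_drop]
      have : l[ℓ-1]'hj ≤ l[ℓ-1+i]'(by simp [List.length_drop] at hi; omega) := by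
        rcases Nat.eq_zero_or_pos i with he | hpos
        · simp [he]
        · have := hl.rel_get_of_lt (a := ⟨ℓ-1, hj⟩)
            (b := ⟨ℓ-1+i, by simp [List.length_drop] at hi; omega⟩) (by simp only [Fin.mk_lt_mk]; omega)
          simpa using this
      simpa using lt_of_lt_of_le hx this
    have hle : (l.take (ℓ-1)).countP (fun a => decide (a ≤ x)) ≤ (l.take (ℓ-1)).length :=
      List.countP_le_length
    have hlen : (l.take (ℓ-1)).length = ℓ - 1 := by simp; omega
    omega

lemma orderStat_le_iff (N ℓ : ℕ) (z : Fin N → ℝ) (x : ℝ) (h1 : 1 ≤ ℓ) (h2 : ℓ ≤ N) :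
    orderStat N z ℓ ≤ x ↔ ℓ ≤ (Finset.univ.filter (fun i => z i ≤ x)).card := by
  have hsorted : (List.insertionSort (· ≤ ·) (List.ofFn z)).Pairwise (· ≤ ·) :=
    List.pairwise_insertionSort _ _
  have hperm := List.perm_insertionSort (· ≤ ·) (List.ofFn z)
  have hlen : (List.insertionSort (· ≤ ·) (List.ofFn z)).length = N := by
    rw [hperm.length_eq, List.length_ofFn]
  rw [orderStat, sorted_getD_le_iff _ hsorted x ℓ h1 (by omega)]
  rw [hperm.countP_eq]
  have : (List.ofFn z).countP (fun a => decide (a ≤ x)) =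
      (Finset.univ.filter (fun i => z i ≤ x)).card := by
    rw [List.ofFn_eq_map, List.countP_map]
    have h2 : (Finset.filter (fun i => z i ≤ x) Finset.univ).card
        = Multiset.card (Multiset.filter (fun i => z i ≤ x) (List.finRange N : Multiset (Fin N))) := rfl
    rw [h2, Multiset.filter_coe, Multiset.coe_card, List.countP_eq_length_filter]
    rfl
  rw [this]

end Lists

section Measure

variable {Ω : Type*} [MeasurableSpace Ω]

lemma measE {μ : Measure Ω} [IsProbabilityMeasure μ] {N : ℕ} {Z : Fin N → Ω → ℝ}
    (hZmeas : ∀ i, Measurable (Z i))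
    (hZindep : iIndepFun Z μ)
    {x : ℝ} {e : ℝ≥0∞} (hp : ∀ i, μ (Z i ⁻¹' Set.Iic x) = e)
    (S : Finset (Fin N)) :
    μ (⋂ i, (if i ∈ S then Z i ⁻¹' Set.Iic x else (Z i ⁻¹' Set.Iic x)ᶜ))
      = e ^ S.card * (1 - e) ^ (N - S.card) := by
  rw [hZindep.meas_iInter (fun i => ?_)]
  · have : ∀ i : Fin N, μ (if i ∈ S then Z i ⁻¹' Set.Iic x else (Z i ⁻¹' Set.Iic x)ᶜ)
        = if i ∈ S then e else 1 - e := by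
      intro i
      by_cases h : i ∈ S
      · simp [h, hp i]
      · simp only [h, if_false]
        rw [prob_compl_eq_one_sub ((hZmeas i) measurableSet_Iic), hp i]
    simp_rw [this]
    rw [Finset.prod_ite, Finset.prod_const, Finset.prod_const]
    congr 1
    · congr 1
      simp [Finset.filter_mem_eq_inter]
    · congr 1
      have : Finset.filter (fun i => i ∉ S) Finset.univ = Sᶜ := by
        ext i; simp
      rw [this, Finset.card_compl, Fintype.card_fin]
  · by_cases h : i ∈ S
    · exact ⟨Set.Iic x, measurableSet_Iic, by simp [h]⟩
    · refine ⟨(Set.Iic x)ᶜ, measurableSet_Iic.compl, ?_⟩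
      simp only [h, if_false, Set.preimage_compl]

lemma measure_tail {μ : Measure Ω} [IsProbabilityMeasure μ] {N : ℕ} {Z : Fin N → Ω → ℝ}
    (hZmeas : ∀ i, Measurable (Z i))
    (hZindep : iIndepFun Z μ)
    {x : ℝ} {e : ℝ≥0∞} (hp : ∀ i, μ (Z i ⁻¹' Set.Iic x) = e) (k : ℕ) :
    μ {ω | k ≤ (Finset.univ.filter (fun i => Z i ω ≤ x)).card}
      = ∑ j ∈ Finset.Icc k N, (N.choose j : ℝ≥0∞) * e ^ j * (1 - e) ^ (N - j) := by
  set E : Finset (Fin N) → Set Ω :=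
    fun S => ⋂ i, (if i ∈ S then Z i ⁻¹' Set.Iic x else (Z i ⁻¹' Set.Iic x)ᶜ) with hE
  have hEmem : ∀ S ω, ω ∈ E S ↔ S = Finset.univ.filter (fun i => Z i ω ≤ x) := by
    intro S ω
    have h1 : ω ∈ E S ↔ ∀ i, (i ∈ S ↔ Z i ω ≤ x) := by
      simp only [hE, Set.mem_iInter]
      apply forall_congr'
      intro i
      by_cases hi : i ∈ S <;> simp [hi]
    rw [h1, Finset.ext_iff]
    simp
  have hEmeas : ∀ S, MeasurableSet (E S) := by
    intro S
    apply MeasurableSet.iInter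
    intro i
    by_cases hi : i ∈ S
    · simpa [hi] using (hZmeas i) measurableSet_Iic
    · simpa [hi] using ((hZmeas i) measurableSet_Iic).compl
  have hset : {ω | k ≤ (Finset.univ.filter (fun i => Z i ω ≤ x)).card}
      = ⋃ S ∈ Finset.univ.filter (fun S : Finset (Fin N) => k ≤ S.card), E S := by
    ext ω
    simp only [Set.mem_setOf_eq, Set.mem_iUnion, Finset.mem_filter, Finset.mem_univ,
      true_and, hEmem, exists_prop]
    constructor
    · intro h
      exact ⟨_, h, rfl⟩
    · rintro ⟨S, hk, rfl⟩
      exact hk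
  have hdisj : (↑(Finset.univ.filter (fun S : Finset (Fin N) => k ≤ S.card)) : Set (Finset (Fin N))).PairwiseDisjoint E := by
    intro S _ T _ hne
    refine Set.disjoint_left.mpr fun ω hS hT => hne ?_
    rw [(hEmem S ω).mp hS, (hEmem T ω).mp hT]
  rw [hset, measure_biUnion_finset hdisj (fun S _ => hEmeas S)]
  have hval : ∀ S : Finset (Fin N), μ (E S) = e ^ S.card * (1 - e) ^ (N - S.card) :=
    fun S => measE hZmeas hZindep hp S
  simp_rw [hval]
  have hsplit : Finset.univ.filter (fun S : Finset (Fin N) => k ≤ S.card)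
      = (Finset.Icc k N).biUnion (fun j => Finset.powersetCard j (Finset.univ : Finset (Fin N))) := by
    ext S
    have hcard : S.card ≤ N := by
      simpa using Finset.card_le_univ S
    simp only [Finset.mem_filter, Finset.mem_univ, true_and, Finset.mem_biUnion,
      Finset.mem_Icc, Finset.mem_powersetCard_univ]
    constructor
    · intro h; exact ⟨S.card, ⟨h, hcard⟩, rfl⟩
    · rintro ⟨j, ⟨hj, _⟩, rfl⟩; exact hj
  rw [hsplit, Finset.sum_biUnion]
  · refine Finset.sum_congr rfl fun j hj => ?_
    have : ∀ S ∈ Finset.powersetCard j (Finset.univ : Finset (Fin N)),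
        e ^ S.card * (1 - e) ^ (N - S.card) = e ^ j * (1 - e) ^ (N - j) := by
      intro S hS
      rw [Finset.mem_powersetCard_univ.mp hS]
    rw [Finset.sum_congr rfl this, Finset.sum_const, Finset.card_powersetCard,
      Finset.card_univ, Fintype.card_fin, nsmul_eq_mul, mul_assoc]
  · intro a _ b _ hab
    refine Finset.disjoint_left.mpr fun S hSa hSb => hab ?_
    rw [← Finset.mem_powersetCard_univ.mp hSa, ← Finset.mem_powersetCard_univ.mp hSb]

end Measure

section Algebra

lemma rhs_eq (N M : ℕ) (hM : 1 ≤ M) (hMN : M ≤ N) (p : ℝ) :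
    ∑ m ∈ Finset.range M, e1 N M m * p ^ (N - m)
      = ∑ ℓ ∈ Finset.range M,
          (((M : ℝ) - ℓ) / M) * (N.choose ℓ : ℝ) * p ^ (N - ℓ) * (1 - p) ^ ℓ := by
  simp only [e1, Finset.sum_mul]
  rw [Finset.sum_comm' (s' := fun ℓ => Finset.range (ℓ + 1)) (t' := Finset.range M)
    (by intro m ℓ; simp only [Finset.mem_range, Finset.mem_Icc]; have h1 := hM; have h2 := hMN; omega)]
  refine Finset.sum_congr rfl fun ℓ hℓ => ?_
  rw [Finset.mem_range] at hℓ
  have hb : (1 - p) ^ ℓ = ∑ m ∈ Finset.range (ℓ + 1),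
      (ℓ.choose m : ℝ) * ((-1 : ℝ) ^ (ℓ - m) * p ^ (ℓ - m)) := by
    have := add_pow (1 : ℝ) (-p) ℓ
    simp only [one_pow, one_mul] at this
    rw [show (1 : ℝ) - p = 1 + (-p) by ring, this]
    refine Finset.sum_congr rfl fun m hm => ?_
    rw [neg_pow]
    ring
  rw [hb, Finset.mul_sum]
  refine Finset.sum_congr rfl fun m hm => ?_
  rw [Finset.mem_range] at hm
  have hp : p ^ (N - m) = p ^ (N - ℓ) * p ^ (ℓ - m) := by
    rw [← pow_add]
    congr 1
    omega
  rw [hp]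
  ring

lemma lhs_eq (N M : ℕ) (hM : 1 ≤ M) (hMN : M ≤ N) (p : ℝ) :
    ∑ ℓ ∈ Finset.Icc (N - M + 1) N, (1 / (M : ℝ)) *
        ∑ j ∈ Finset.Icc ℓ N, (N.choose j : ℝ) * p ^ j * (1 - p) ^ (N - j)
      = ∑ ℓ ∈ Finset.range M,
          (((M : ℝ) - ℓ) / M) * (N.choose ℓ : ℝ) * p ^ (N - ℓ) * (1 - p) ^ ℓ := by
  simp only [Finset.mul_sum]
  rw [Finset.sum_comm' (s' := fun j => Finset.Icc (N - M + 1) j) (t' := Finset.Icc (N - M + 1) N)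
    (by intro ℓ j; simp only [Finset.mem_Icc]; have h1 := hM; have h2 := hMN; omega)]
  have hcount : ∀ j ∈ Finset.Icc (N - M + 1) N,
      ∑ _ℓ ∈ Finset.Icc (N - M + 1) j,
        (1 / (M : ℝ)) * ((N.choose j : ℝ) * p ^ j * (1 - p) ^ (N - j))
      = ((j + M - N : ℕ) : ℝ) * ((1 / (M : ℝ)) * ((N.choose j : ℝ) * p ^ j * (1 - p) ^ (N - j))) := by
    intro j hj
    rw [Finset.mem_Icc] at hj
    rw [Finset.sum_const, Nat.card_Icc, nsmul_eq_mul]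
    congr 2
    omega
  rw [Finset.sum_congr rfl hcount]
  refine Finset.sum_nbij' (i := fun j => N - j) (j := fun m => N - m) ?_ ?_ ?_ ?_ ?_
  · intro j hj; rw [Finset.mem_Icc] at hj; rw [Finset.mem_range]; omega
  · intro m hm; rw [Finset.mem_range] at hm; rw [Finset.mem_Icc]; omega
  · intro j hj; rw [Finset.mem_Icc] at hj; omega
  · intro m hm; rw [Finset.mem_range] at hm; omega
  · intro j hj
    rw [Finset.mem_Icc] at hj
    have h1 : N - (N - j) = j := by omega
    have h2 : N.choose (N - j) = N.choose j := Nat.choose_symm (by omega)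
    rw [h1, h2]
    have h3 : ((j + M - N : ℕ) : ℝ) = (M : ℝ) - ((N - j : ℕ) : ℝ) := by
      have : (N - j : ℕ) = N - j := rfl
      push_cast [Nat.cast_sub (by omega : j ≤ N)]
      have : ((j + M - N : ℕ) : ℝ) = (j : ℝ) + M - N := by
        push_cast [Nat.cast_sub (by omega : N ≤ j + M)]
        ring
      rw [this]; ring
    rw [h3]
    ring

lemma alg_identity (N M : ℕ) (hM : 1 ≤ M) (hMN : M ≤ N) (p : ℝ) :
    ∑ ℓ ∈ Finset.Icc (N - M + 1) N, (1 / (M : ℝ)) *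
        ∑ j ∈ Finset.Icc ℓ N, (N.choose j : ℝ) * p ^ j * (1 - p) ^ (N - j)
      = ∑ m ∈ Finset.range M, e1 N M m * p ^ (N - m) := by
  rw [lhs_eq N M hM hMN p, rhs_eq N M hM hMN p]

end Algebra

/-- if `Z₁,…,Z_N` are i.i.d. with CDF `F`, `R` is uniform on
`{N-M+1,…,N}` independent of the `Zᵢ`, and `Y = Z₍R₎`, then
`F_Y(x) = ∑_{m=0}^{M-1} e₁(N,M,m) F(x)^{N-m}`. -/
theorem stmt_0 {Ω : Type*} [MeasurableSpace Ω] (μ : Measure Ω) [IsProbabilityMeasure μ]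
    (N M : ℕ) (hM : 1 ≤ M) (hMN : M ≤ N)
    (F : ℝ → ℝ) (hFmono : Monotone F) (hFrange : ∀ x, F x ∈ Set.Icc (0 : ℝ) 1)
    (Z : Fin N → Ω → ℝ) (hZmeas : ∀ i, Measurable (Z i))
    (hZindep : iIndepFun Z μ)
    (hZcdf : ∀ i x, (μ {ω | Z i ω ≤ x}).toReal = F x)
    (R : Ω → ℕ) (hRmeas : Measurable R)
    (hRrange : ∀ ω, R ω ∈ Finset.Icc (N - M + 1) N)
    (hRunif : ∀ ℓ ∈ Finset.Icc (N - M + 1) N, (μ {ω | R ω = ℓ}).toReal = 1 / M)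
    (hRZindep : IndepFun (fun ω => fun i => Z i ω) R μ)
    (Y : Ω → ℝ) (hY : ∀ ω, Y ω = orderStat N (fun i => Z i ω) (R ω)) :
    ∀ x, (μ {ω | Y ω ≤ x}).toReal =
      ∑ m ∈ Finset.range M, e1 N M m * F x ^ (N - m) := by
  intro x
  set p : ℝ := F x with hpdef
  have hp0 : 0 ≤ p := (hFrange x).1
  have hp1 : p ≤ 1 := (hFrange x).2
  set e : ℝ≥0∞ := ENNReal.ofReal p with hedef
  have he1 : e ≤ 1 := by
    rw [hedef]
    exact ENNReal.ofReal_le_one.mpr hp1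
  have hene : e ≠ ⊤ := ENNReal.ofReal_ne_top
  have hμi : ∀ i, μ (Z i ⁻¹' Set.Iic x) = e := by
    intro i
    have h := hZcdf i x
    have : {ω | Z i ω ≤ x} = Z i ⁻¹' Set.Iic x := rfl
    rw [this] at h
    rw [hedef, hpdef, ← h, ENNReal.ofReal_toReal (measure_ne_top μ _)]
  -- the count function and its measurability
  set V : Ω → (Fin N → ℝ) := fun ω => fun i => Z i ω with hV
  have hVmeas : Measurable V := measurable_pi_lambda _ (fun i => hZmeas i)
  have hcardmeas : Measurable (fun z : Fin N → ℝ =>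
      (Finset.univ.filter (fun i => z i ≤ x)).card) := by
    have heq : (fun z : Fin N → ℝ => (Finset.univ.filter (fun i => z i ≤ x)).card)
        = fun z => ∑ i : Fin N, if z i ≤ x then 1 else 0 := by
      funext z
      rw [Finset.card_filter]
    rw [heq]
    refine Finset.measurable_sum _ fun i _ => Measurable.ite ?_ measurable_const measurable_const
    exact (measurable_pi_apply i) measurableSet_Iic
  set B : ℕ → Set (Fin N → ℝ) :=
    fun ℓ => {z | ℓ ≤ (Finset.univ.filter (fun i => z i ≤ x)).card} with hB
  have hBmeas : ∀ ℓ, MeasurableSet (B ℓ) := by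
    intro ℓ
    exact hcardmeas (by trivial : MeasurableSet {n : ℕ | ℓ ≤ n})
  set A : ℕ → Set Ω := fun ℓ => {ω | ℓ ≤ (Finset.univ.filter (fun i => Z i ω ≤ x)).card}
    with hA
  have hAeq : ∀ ℓ, A ℓ = V ⁻¹' (B ℓ) := fun ℓ => rfl
  -- decomposition of the event
  have hsplit : {ω | Y ω ≤ x}
      = ⋃ ℓ ∈ Finset.Icc (N - M + 1) N, (A ℓ ∩ R ⁻¹' {ℓ}) := by
    ext ω
    simp only [Set.mem_setOf_eq, Set.mem_iUnion, Set.mem_inter_iff, Set.mem_preimage,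
      Set.mem_singleton_iff, exists_prop]
    have hRω := hRrange ω
    rw [Finset.mem_Icc] at hRω
    have hord := orderStat_le_iff N (R ω) (fun i => Z i ω) x (by omega) (by omega)
    constructor
    · intro h
      rw [hY ω, hord] at h
      exact ⟨R ω, by rw [Finset.mem_Icc]; omega, h, rfl⟩
    · rintro ⟨ℓ, hℓ, hcard, rfl⟩
      rw [hY ω, hord]
      exact hcard
  have hAmeas : ∀ ℓ, MeasurableSet (A ℓ) := fun ℓ => hVmeas (hBmeas ℓ)
  have hRsetmeas : ∀ ℓ : ℕ, MeasurableSet (R ⁻¹' {ℓ}) :=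
    fun ℓ => hRmeas (by trivial : MeasurableSet ({ℓ} : Set ℕ))
  have hdisj : (↑(Finset.Icc (N - M + 1) N) : Set ℕ).PairwiseDisjoint
      (fun ℓ => A ℓ ∩ R ⁻¹' {ℓ}) := by
    intro a _ b _ hab
    refine Set.disjoint_left.mpr fun ω hωa hωb => hab ?_
    rw [← hωa.2, ← hωb.2]
  rw [hsplit, measure_biUnion_finset hdisj
    (fun ℓ _ => (hAmeas ℓ).inter (hRsetmeas ℓ))]
  -- each piece: independence
  have hpiece : ∀ ℓ ∈ Finset.Icc (N - M + 1) N,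
      μ (A ℓ ∩ R ⁻¹' {ℓ}) = μ (A ℓ) * μ (R ⁻¹' {ℓ}) := by
    intro ℓ _
    rw [hAeq ℓ]
    exact hRZindep.measure_inter_preimage_eq_mul (B ℓ) {ℓ} (hBmeas ℓ) (by trivial)
  rw [Finset.sum_congr rfl hpiece]
  -- each A ℓ measure
  have hAval : ∀ ℓ, μ (A ℓ)
      = ∑ j ∈ Finset.Icc ℓ N, (N.choose j : ℝ≥0∞) * e ^ j * (1 - e) ^ (N - j) :=
    fun ℓ => measure_tail hZmeas hZindep hμi ℓ
  -- pass to toReal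
  have hterm_ne_top : ∀ j : ℕ, (N.choose j : ℝ≥0∞) * e ^ j * (1 - e) ^ (N - j) ≠ ⊤ := by
    intro j
    exact ENNReal.mul_ne_top
      (ENNReal.mul_ne_top (ENNReal.natCast_ne_top _) (ENNReal.pow_ne_top hene))
      (ENNReal.pow_ne_top (by exact ne_top_of_le_ne_top ENNReal.one_ne_top tsub_le_self))
  have htoReal_term : ∀ j : ℕ,
      ((N.choose j : ℝ≥0∞) * e ^ j * (1 - e) ^ (N - j)).toReal
        = (N.choose j : ℝ) * p ^ j * (1 - p) ^ (N - j) := by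
    intro j
    rw [ENNReal.toReal_mul, ENNReal.toReal_mul, ENNReal.toReal_pow, ENNReal.toReal_pow,
      ENNReal.toReal_natCast]
    congr 2
    · rw [hedef, ENNReal.toReal_ofReal hp0]
    · rw [ENNReal.toReal_sub_of_le he1 ENNReal.one_ne_top, ENNReal.toReal_one,
        hedef, ENNReal.toReal_ofReal hp0]
  rw [ENNReal.toReal_sum (fun ℓ _ => ENNReal.mul_ne_top
    (by rw [hAval ℓ]; exact ENNReal.sum_ne_top.mpr fun j _ => hterm_ne_top j)
    (measure_ne_top μ _))]
  have : ∀ ℓ ∈ Finset.Icc (N - M + 1) N,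
      (μ (A ℓ) * μ (R ⁻¹' {ℓ})).toReal
        = (1 / (M : ℝ)) * ∑ j ∈ Finset.Icc ℓ N, (N.choose j : ℝ) * p ^ j * (1 - p) ^ (N - j) := by
    intro ℓ hℓ
    rw [ENNReal.toReal_mul]
    have hR : (μ (R ⁻¹' {ℓ})).toReal = 1 / M := by
      have := hRunif ℓ hℓ
      have hset : {ω | R ω = ℓ} = R ⁻¹' {ℓ} := by ext ω; simp
      rw [← hset]
      exact this
    rw [hR, hAval ℓ, ENNReal.toReal_sum (fun j _ => hterm_ne_top j)]
    rw [mul_comm]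
    congr 1
    exact Finset.sum_congr rfl fun j _ => htoReal_term j
  rw [Finset.sum_congr rfl this]
  exact alg_identity N M hM hMN p
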